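/- Fix a seed set S ⊆ V and ε > 0. For any two edge-probability vectors p, p' : E → [0,1] with Σ_{e ∈ E} |p(e) − p'(e)| ≤ ε/n, the IC influence spreads satisfy |σ^p(S) − σ^{p'}(S)| ≤ ε. -/

import Mathlib

set_option autoImplicit false

section AuxLemmas

lemma icSpread_w_sum_one {α : Type*} [DecidableEq α] (E : Finset α) (p : α → ℝ) :
    ∑ A ∈ E.powerset, (∏ e ∈ A, p e) * ∏ e ∈ E \ A, (1 - p e) = 1 := by
  rw [← Finset.prod_add]
  simp

lemma icSpread_w_nonneg {α : Type*} [DecidableEq α] {E A : Finset α} (hA : A ⊆ E) {p : α → ℝ}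
    (hp : ∀ e ∈ E, p e ∈ Set.Icc (0:ℝ) 1) :
    0 ≤ (∏ e ∈ A, p e) * ∏ e ∈ E \ A, (1 - p e) := by
  apply mul_nonneg
  · exact Finset.prod_nonneg fun e he => (hp e (hA he)).1
  · exact Finset.prod_nonneg fun e he => by
      have := (hp e (Finset.mem_sdiff.mp he).1).2; linarith

lemma icSpread_l1_bound {α : Type*} [DecidableEq α] (E : Finset α) (p p' : α → ℝ)
    (hp : ∀ e ∈ E, p e ∈ Set.Icc (0:ℝ) 1) (hp' : ∀ e ∈ E, p' e ∈ Set.Icc (0:ℝ) 1) :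
    ∑ A ∈ E.powerset, |(∏ e ∈ A, p e) * ∏ e ∈ E \ A, (1 - p e)
      - (∏ e ∈ A, p' e) * ∏ e ∈ E \ A, (1 - p' e)| ≤ 2 * ∑ e ∈ E, |p e - p' e| := by
  induction E using Finset.induction_on with
  | empty => simp
  | @insert a s ha ih =>
    have hpa := hp a (Finset.mem_insert_self a s)
    have hp'a := hp' a (Finset.mem_insert_self a s)
    have hps : ∀ e ∈ s, p e ∈ Set.Icc (0:ℝ) 1 := fun e he => hp e (Finset.mem_insert_of_mem he)
    have hp's : ∀ e ∈ s, p' e ∈ Set.Icc (0:ℝ) 1 := fun e he => hp' e (Finset.mem_insert_of_mem he)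
    rw [Finset.sum_powerset_insert ha]
    have key : ∀ A ∈ s.powerset,
        |(∏ e ∈ A, p e) * ∏ e ∈ insert a s \ A, (1 - p e)
          - (∏ e ∈ A, p' e) * ∏ e ∈ insert a s \ A, (1 - p' e)|
        + |(∏ e ∈ insert a A, p e) * ∏ e ∈ insert a s \ insert a A, (1 - p e)
          - (∏ e ∈ insert a A, p' e) * ∏ e ∈ insert a s \ insert a A, (1 - p' e)|
        ≤ |(∏ e ∈ A, p e) * ∏ e ∈ s \ A, (1 - p e)
            - (∏ e ∈ A, p' e) * ∏ e ∈ s \ A, (1 - p' e)|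
          + 2 * |p a - p' a| * ((∏ e ∈ A, p' e) * ∏ e ∈ s \ A, (1 - p' e)) := by
      intro A hA
      rw [Finset.mem_powerset] at hA
      have haA : a ∉ A := fun h => ha (hA h)
      have h1 : insert a s \ A = insert a (s \ A) :=
        Finset.insert_sdiff_of_notMem s haA
      have h2 : insert a s \ insert a A = s \ A := by
        rw [Finset.insert_sdiff_insert, Finset.sdiff_insert_of_notMem ha]
      have haSA : a ∉ s \ A := fun h => ha (Finset.mem_sdiff.mp h).1
      rw [h1, h2, Finset.prod_insert haSA, Finset.prod_insert haSA,
        Finset.prod_insert haA, Finset.prod_insert haA]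
      set w := (∏ e ∈ A, p e) * ∏ e ∈ s \ A, (1 - p e) with hw
      set w' := (∏ e ∈ A, p' e) * ∏ e ∈ s \ A, (1 - p' e) with hw'
      have hw'0 : 0 ≤ w' := icSpread_w_nonneg hA hp's
      have e1 : (∏ e ∈ A, p e) * ((1 - p a) * ∏ e ∈ s \ A, (1 - p e))
          - (∏ e ∈ A, p' e) * ((1 - p' a) * ∏ e ∈ s \ A, (1 - p' e))
          = (1 - p a) * (w - w') + (p' a - p a) * w' := by ring
      have e2 : p a * (∏ e ∈ A, p e) * ∏ e ∈ s \ A, (1 - p e)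
          - p' a * (∏ e ∈ A, p' e) * ∏ e ∈ s \ A, (1 - p' e)
          = p a * (w - w') + (p a - p' a) * w' := by ring
      rw [e1, e2]
      have h3 : (0:ℝ) ≤ 1 - p a := by linarith [hpa.2]
      have t1 : |(1 - p a) * (w - w') + (p' a - p a) * w'|
          ≤ (1 - p a) * |w - w'| + |p a - p' a| * w' :=
        calc |(1 - p a) * (w - w') + (p' a - p a) * w'|
            ≤ |(1 - p a) * (w - w')| + |(p' a - p a) * w'| := abs_add_le _ _
          _ = (1 - p a) * |w - w'| + |p a - p' a| * w' := by
              rw [abs_mul, abs_mul, abs_of_nonneg h3, abs_of_nonneg hw'0, abs_sub_comm (p' a) (p a)]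
      have t2 : |p a * (w - w') + (p a - p' a) * w'|
          ≤ p a * |w - w'| + |p a - p' a| * w' :=
        calc |p a * (w - w') + (p a - p' a) * w'|
            ≤ |p a * (w - w')| + |(p a - p' a) * w'| := abs_add_le _ _
          _ = p a * |w - w'| + |p a - p' a| * w' := by
              rw [abs_mul, abs_mul, abs_of_nonneg hpa.1, abs_of_nonneg hw'0]
      have : (1 - p a) * |w - w'| + |p a - p' a| * w' + (p a * |w - w'| + |p a - p' a| * w')
          = |w - w'| + 2 * |p a - p' a| * w' := by ring
      linarith
    calc ∑ A ∈ s.powerset, |(∏ e ∈ A, p e) * ∏ e ∈ insert a s \ A, (1 - p e)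
            - (∏ e ∈ A, p' e) * ∏ e ∈ insert a s \ A, (1 - p' e)|
          + ∑ A ∈ s.powerset, |(∏ e ∈ insert a A, p e) * ∏ e ∈ insert a s \ insert a A, (1 - p e)
            - (∏ e ∈ insert a A, p' e) * ∏ e ∈ insert a s \ insert a A, (1 - p' e)|
        = ∑ A ∈ s.powerset, (|(∏ e ∈ A, p e) * ∏ e ∈ insert a s \ A, (1 - p e)
            - (∏ e ∈ A, p' e) * ∏ e ∈ insert a s \ A, (1 - p' e)|
          + |(∏ e ∈ insert a A, p e) * ∏ e ∈ insert a s \ insert a A, (1 - p e)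
            - (∏ e ∈ insert a A, p' e) * ∏ e ∈ insert a s \ insert a A, (1 - p' e)|) := by
          rw [Finset.sum_add_distrib]
      _ ≤ ∑ A ∈ s.powerset, (|(∏ e ∈ A, p e) * ∏ e ∈ s \ A, (1 - p e)
            - (∏ e ∈ A, p' e) * ∏ e ∈ s \ A, (1 - p' e)|
          + 2 * |p a - p' a| * ((∏ e ∈ A, p' e) * ∏ e ∈ s \ A, (1 - p' e))) :=
          Finset.sum_le_sum key
      _ = (∑ A ∈ s.powerset, |(∏ e ∈ A, p e) * ∏ e ∈ s \ A, (1 - p e)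
            - (∏ e ∈ A, p' e) * ∏ e ∈ s \ A, (1 - p' e)|)
          + 2 * |p a - p' a| * ∑ A ∈ s.powerset, (∏ e ∈ A, p' e) * ∏ e ∈ s \ A, (1 - p' e) := by
          rw [Finset.sum_add_distrib, Finset.mul_sum]
      _ ≤ 2 * ∑ e ∈ s, |p e - p' e| + 2 * |p a - p' a| * 1 := by
          rw [icSpread_w_sum_one]
          exact add_le_add_left (ih hps hp's) _
      _ = 2 * ∑ e ∈ insert a s, |p e - p' e| := by
          rw [Finset.sum_insert ha]; ring

end AuxLemmas

/-- IC influence spread via live-edge graphs: for a live-edge set `A ⊆ E`, the set of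
nodes reachable from the seed set `S` via edges of `A`, and the influence spread
`σ^p(S) = ∑_{A ⊆ E} (∏_{e ∈ A} p e)(∏_{e ∈ E∖A} (1 − p e)) |R(A,S)|`. -/
noncomputable def icSpread {V : Type*} [Fintype V] [DecidableEq V]
    (E : Finset (V × V)) (p : V × V → ℝ) (S : Finset V) : ℝ :=
  ∑ A ∈ E.powerset,
    ((∏ e ∈ A, p e) * ∏ e ∈ E \ A, (1 - p e)) *
      (Set.ncard {x : V | ∃ s ∈ S, Relation.ReflTransGen (fun a b => (a, b) ∈ A) s x} : ℝ)

/-- **Lipschitz continuity of the IC influence spread in the edge probabilities.**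
Fix a seed set `S ⊆ V` and `ε > 0`. For any two edge-probability vectors
`p, p' : E → [0,1]` with `∑_{e ∈ E} |p e − p' e| ≤ ε/n`, where `n = |V|`,
the IC influence spreads satisfy `|σ^p(S) − σ^{p'}(S)| ≤ ε`. -/
theorem icSpread_close
    {V : Type*} [Fintype V] [DecidableEq V]
    (E : Finset (V × V)) (p p' : V × V → ℝ)
    (hp : ∀ e ∈ E, p e ∈ Set.Icc (0 : ℝ) 1)
    (hp' : ∀ e ∈ E, p' e ∈ Set.Icc (0 : ℝ) 1)
    (S : Finset V) (ε : ℝ) (hε : 0 < ε)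
    (hsum : ∑ e ∈ E, |p e - p' e| ≤ ε / (Fintype.card V : ℝ)) :
    |icSpread E p S - icSpread E p' S| ≤ ε := by
  classical
  set r : Finset (V × V) → ℝ := fun A =>
    (Set.ncard {x : V | ∃ s ∈ S, Relation.ReflTransGen (fun a b => (a, b) ∈ A) s x} : ℝ)
    with hr_def
  have hr_nonneg : ∀ A, 0 ≤ r A := fun A => Nat.cast_nonneg _
  have hr_le : ∀ A, r A ≤ (Fintype.card V : ℝ) := by
    intro A
    have h := Set.ncard_le_ncard
      (Set.subset_univ {x : V | ∃ s ∈ S, Relation.ReflTransGen (fun a b => (a, b) ∈ A) s x})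
      Set.finite_univ
    rw [Set.ncard_univ, Nat.card_eq_fintype_card] at h
    simp only [hr_def]
    exact_mod_cast h
  by_cases h0 : Fintype.card V = 0
  · have hz : ∀ A, r A = 0 := by
      intro A
      have := hr_le A
      rw [h0] at this
      exact le_antisymm (by exact_mod_cast this) (hr_nonneg A)
    have hσ : ∀ q : V × V → ℝ, icSpread E q S = 0 := by
      intro q
      unfold icSpread
      apply Finset.sum_eq_zero
      intro A _
      have := hz A
      simp only [hr_def] at this
      rw [this, mul_zero]
    rw [hσ p, hσ p']
    simpa using hε.le
  · have hn : (0:ℝ) < (Fintype.card V : ℝ) := by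
      exact_mod_cast Nat.pos_of_ne_zero h0
    set n : ℝ := (Fintype.card V : ℝ) with hn_def
    have key : icSpread E p S - icSpread E p' S
        = ∑ A ∈ E.powerset,
            ((∏ e ∈ A, p e) * ∏ e ∈ E \ A, (1 - p e)
              - (∏ e ∈ A, p' e) * ∏ e ∈ E \ A, (1 - p' e)) * (r A - n / 2) := by
      unfold icSpread
      rw [← Finset.sum_sub_distrib]
      have hzero : ∑ A ∈ E.powerset,
          ((∏ e ∈ A, p e) * ∏ e ∈ E \ A, (1 - p e)
            - (∏ e ∈ A, p' e) * ∏ e ∈ E \ A, (1 - p' e)) * (n / 2) = 0 := by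
        rw [← Finset.sum_mul, Finset.sum_sub_distrib, icSpread_w_sum_one, icSpread_w_sum_one]
        ring
      have hsplit : ∑ A ∈ E.powerset,
          (((∏ e ∈ A, p e) * ∏ e ∈ E \ A, (1 - p e)) * r A
            - ((∏ e ∈ A, p' e) * ∏ e ∈ E \ A, (1 - p' e)) * r A)
          = (∑ A ∈ E.powerset,
              ((∏ e ∈ A, p e) * ∏ e ∈ E \ A, (1 - p e)
                - (∏ e ∈ A, p' e) * ∏ e ∈ E \ A, (1 - p' e)) * (r A - n / 2))
            + ∑ A ∈ E.powerset,
              ((∏ e ∈ A, p e) * ∏ e ∈ E \ A, (1 - p e)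
                - (∏ e ∈ A, p' e) * ∏ e ∈ E \ A, (1 - p' e)) * (n / 2) := by
        rw [← Finset.sum_add_distrib]
        apply Finset.sum_congr rfl
        intro A _
        ring
      rw [hsplit, hzero, add_zero]
    rw [key]
    calc |∑ A ∈ E.powerset,
            ((∏ e ∈ A, p e) * ∏ e ∈ E \ A, (1 - p e)
              - (∏ e ∈ A, p' e) * ∏ e ∈ E \ A, (1 - p' e)) * (r A - n / 2)|
        ≤ ∑ A ∈ E.powerset,
            |((∏ e ∈ A, p e) * ∏ e ∈ E \ A, (1 - p e)
              - (∏ e ∈ A, p' e) * ∏ e ∈ E \ A, (1 - p' e)) * (r A - n / 2)| :=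
          Finset.abs_sum_le_sum_abs _ _
      _ ≤ ∑ A ∈ E.powerset,
            |(∏ e ∈ A, p e) * ∏ e ∈ E \ A, (1 - p e)
              - (∏ e ∈ A, p' e) * ∏ e ∈ E \ A, (1 - p' e)| * (n / 2) := by
          apply Finset.sum_le_sum
          intro A _
          rw [abs_mul]
          apply mul_le_mul_of_nonneg_left _ (abs_nonneg _)
          rw [abs_le]
          constructor
          · linarith [hr_nonneg A]
          · linarith [hr_le A]
      _ = (∑ A ∈ E.powerset,
            |(∏ e ∈ A, p e) * ∏ e ∈ E \ A, (1 - p e)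
              - (∏ e ∈ A, p' e) * ∏ e ∈ E \ A, (1 - p' e)|) * (n / 2) := by
          rw [Finset.sum_mul]
      _ ≤ (2 * ∑ e ∈ E, |p e - p' e|) * (n / 2) := by
          apply mul_le_mul_of_nonneg_right (icSpread_l1_bound E p p' hp hp')
          positivity
      _ = n * ∑ e ∈ E, |p e - p' e| := by ring
      _ ≤ n * (ε / n) := by
          apply mul_le_mul_of_nonneg_left hsum hn.le
      _ = ε := by field_simp
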